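/- Let R be a commutative Noetherian ring. The following are equivalent: (1) R has an Artinian quotient ring Q = C⁻¹R; (2) C' ⊆ C; (3) the associated primes of the zero ideal (0) are exactly the minimal primes of R. -/

import Mathlib

universe u v

open Ideal

section AuxLemmas

variable {R : Type u} [CommRing R]

/-- Module-level Akizuki step: a Noetherian module annihilated by a (multiset) product of
maximal ideals is Artinian. -/
theorem auxCA_isArtinian_of_prod_smul_eq_bot (s : Multiset (Ideal R)) :
    ∀ (M : Type v) [AddCommGroup M] [Module R M] [IsNoetherian R M],
      (∀ I ∈ s, I.IsMaximal) → s.prod • (⊤ : Submodule R M) = ⊥ → IsArtinian R M := by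
  induction s using Multiset.induction_on with
  | empty =>
    intro M _ _ _ _ h
    rw [Multiset.prod_zero, Ideal.one_eq_top, Submodule.top_smul] at h
    have : Subsingleton M := by
      refine ⟨fun a b => ?_⟩
      have ha : a ∈ (⊥ : Submodule R M) := h ▸ Submodule.mem_top
      have hb : b ∈ (⊥ : Submodule R M) := h ▸ Submodule.mem_top
      rw [Submodule.mem_bot] at ha hb
      rw [ha, hb]
    infer_instance
  | cons m s ih =>
    intro M _ _ _ hmax h
    rw [Multiset.prod_cons] at h
    set S : Submodule R M := s.prod • ⊤ with hSdef
    have hmS : m • S = ⊥ := by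
      rw [hSdef, ← Submodule.smul_assoc, Ideal.smul_eq_mul, h]
    -- the quotient is Artinian by induction
    have hq : s.prod • (⊤ : Submodule R (M ⧸ S)) = ⊥ := by
      have h1 : Submodule.map S.mkQ (s.prod • (⊤ : Submodule R M)) =
          s.prod • (⊤ : Submodule R (M ⧸ S)) := by
        rw [Submodule.map_smul'', Submodule.map_top, S.range_mkQ]
      have h2 : Submodule.map S.mkQ S = ⊥ :=
        le_bot_iff.mp (Submodule.map_le_iff_le_comap.mpr
          (by rw [Submodule.comap_bot, Submodule.ker_mkQ]))
      rw [← h1, ← hSdef, h2]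
    haveI hart1 : IsArtinian R (M ⧸ S) :=
      ih (M ⧸ S) (fun I hI => hmax I (Multiset.mem_cons_of_mem hI)) hq
    -- the submodule S is Artinian : it is a f.d. vector space over R ⧸ m
    haveI hm : m.IsMaximal := hmax m (Multiset.mem_cons_self m s)
    have htor : Module.IsTorsionBySet R S (m : Set R) := by
      intro x a
      have h1 : (a : R) • (x : M) ∈ m • S := Submodule.smul_mem_smul a.2 x.2
      rw [hmS, Submodule.mem_bot] at h1
      exact Subtype.ext (by simpa using h1)
    letI : Field (R ⧸ m) := Ideal.Quotient.field m
    letI : Module (R ⧸ m) S := htor.module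
    haveI : IsScalarTower R (R ⧸ m) S := htor.isScalarTower
    haveI hns : IsNoetherian R S := inferInstance
    haveI : IsNoetherian (R ⧸ m) S := isNoetherian_of_tower R hns
    haveI : Module.Finite (R ⧸ m) S := Module.finite_def.mpr (IsNoetherian.noetherian ⊤)
    haveI : IsArtinian (R ⧸ m) S := isArtinian_of_fg_of_artinian'
    -- transfer Artinianness back along the surjection `R → R ⧸ m`
    haveI hart2 : IsArtinian R S := by
      have hf : ∀ (N : Submodule R S) (c : R ⧸ m) (x : S), x ∈ N → c • x ∈ N := by
        intro N c x hx
        obtain ⟨r, rfl⟩ := Ideal.Quotient.mk_surjective c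
        have hsmul : (Ideal.Quotient.mk m r) • x = r • x :=
          Module.IsTorsionBySet.mk_smul htor r x
        rw [hsmul]
        exact N.smul_mem r hx
      let f : Submodule R S → Submodule (R ⧸ m) S := fun N =>
        { carrier := N
          add_mem' := fun ha hb => N.add_mem ha hb
          zero_mem' := N.zero_mem
          smul_mem' := fun c x hx => hf N c x hx }
      have hle : ∀ a b : Submodule R S, f a ≤ f b ↔ a ≤ b := by
        intro a b
        constructor
        · intro h x hx
          exact h hx
        · intro h x hx
          exact h hx
      have hlt : ∀ a b : Submodule R S, f a < f b ↔ a < b := by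
        intro a b
        rw [lt_iff_le_not_ge, lt_iff_le_not_ge, hle, hle]
      have hinj : Function.Injective f := by
        intro a b hab
        apply le_antisymm
        · exact (hle a b).mp (le_of_eq hab)
        · exact (hle b a).mp (le_of_eq hab.symm)
      have hemb : ((· < ·) : Submodule R S → Submodule R S → Prop) ↪r
          ((· < ·) : Submodule (R ⧸ m) S → Submodule (R ⧸ m) S → Prop) :=
        ⟨⟨f, hinj⟩, fun {a b} => hlt a b⟩
      exact (isArtinian_iff R S).mpr (hemb.wellFounded ((isArtinian_iff (R ⧸ m) S).mp ‹IsArtinian (R ⧸ m) S›))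
    exact (isArtinian_iff_submodule_quotient S).mpr ⟨hart2, hart1⟩

/-- Akizuki/Hopkins: a Noetherian commutative ring all of whose primes are maximal is
Artinian. -/
theorem auxCA_isArtinianRing_of_primes_maximal [IsNoetherianRing R]
    (H : ∀ p : Ideal R, p.IsPrime → p.IsMaximal) : IsArtinianRing R := by
  obtain ⟨k, hk⟩ := IsNoetherianRing.isNilpotent_nilradical R
  have hfin := minimalPrimes.finite_of_isNoetherianRing R
  have hprod : hfin.toFinset.val.prod ≤ nilradical R := by
    have h1 : nilradical R = sInf (minimalPrimes R) := by
      rw [show nilradical R = (0 : Ideal R).radical from rfl, ← Ideal.sInf_minimalPrimes]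
      rfl
    rw [h1]
    refine le_sInf ?_
    intro p hp
    exact le_trans Ideal.multiset_prod_le_inf
      (Multiset.inf_le (by rwa [← Set.Finite.mem_toFinset hfin] at hp))
  have hs : ((k • hfin.toFinset.val).prod : Ideal R) ≤ ⊥ := by
    rw [Multiset.prod_nsmul]
    calc hfin.toFinset.val.prod ^ k ≤ (nilradical R) ^ k := Ideal.pow_right_mono hprod k
    _ = ⊥ := hk
  refine isArtinianRing_iff.mpr
    (auxCA_isArtinian_of_prod_smul_eq_bot (k • hfin.toFinset.val) R (fun I hI => ?_) ?_)
  · have hIT : I ∈ hfin.toFinset.val := Multiset.mem_of_mem_nsmul hI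
    have hImin : I ∈ minimalPrimes R := hfin.mem_toFinset.mp hIT
    exact H I hImin.1.1
  · have h2 : (k • hfin.toFinset.val).prod • (⊤ : Submodule R R) =
        (k • hfin.toFinset.val).prod := by
      rw [Ideal.smul_eq_mul, ← Ideal.one_eq_top, mul_one]
    rw [h2]
    exact le_bot_iff.mp hs

/-- The "saturated annihilator" ideal `J_x = {a | ∃ s ∉ q, a s x = 0}`. -/
def auxCA_J (q : Ideal R) (hq : q.IsPrime) (x : R) : Ideal R where
  carrier := {a | ∃ s, s ∉ q ∧ a * s * x = 0}
  zero_mem' := ⟨1, fun h => hq.ne_top (Ideal.eq_top_of_isUnit_mem q h isUnit_one), by ring⟩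
  add_mem' := by
    rintro a b ⟨s, hs, has⟩ ⟨t, ht, hbt⟩
    refine ⟨s * t, fun h => (hq.mem_or_mem h).elim hs ht, ?_⟩
    linear_combination t * has + s * hbt
  smul_mem' := by
    rintro c a ⟨s, hs, has⟩
    refine ⟨s, hs, ?_⟩
    have : c • a = c * a := rfl
    rw [this]
    linear_combination c * has

theorem auxCA_mem_J {q : Ideal R} {hq : q.IsPrime} {x a : R} :
    a ∈ auxCA_J q hq x ↔ ∃ s, s ∉ q ∧ a * s * x = 0 := Iff.rfl

/-- Every minimal prime of a Noetherian commutative ring is an associated prime of `(0)`. -/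
theorem auxCA_min_subset_ass [IsNoetherianRing R] :
    minimalPrimes R ⊆ associatedPrimes R R := by
  classical
  intro q hq
  have hqp : q.IsPrime := hq.1.1
  -- pick x with J x maximal among those with 1 ∉ J x
  have hS : ({I : Ideal R | ∃ x : R, I = auxCA_J q hqp x ∧ (1 : R) ∉ I}).Nonempty := by
    refine ⟨auxCA_J q hqp 1, 1, rfl, ?_⟩
    rintro ⟨s, hs, h⟩
    exact hs (by rw [show s = 0 by linear_combination h]; exact q.zero_mem)
  obtain ⟨J, hJmem, hJmax⟩ :=
    (set_has_maximal_iff_noetherian.mpr ‹IsNoetherianRing R›) _ hS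
  obtain ⟨x, rfl, h1J⟩ := hJmem
  have hmax' : ∀ I ∈ {I : Ideal R | ∃ y : R, I = auxCA_J q hqp y ∧ (1 : R) ∉ I},
      auxCA_J q hqp x ≤ I → I = auxCA_J q hqp x := by
    intro I hI hle
    by_contra hne
    exact hJmax I hI (lt_of_le_of_ne hle (fun h => hne h.symm))
  -- J x ⊆ q
  have hsubq : auxCA_J q hqp x ≤ q := by
    rintro a ⟨s, hs, hasx⟩
    by_contra haq
    exact h1J ⟨a * s, fun h => (hqp.mem_or_mem h).elim haq hs, by linear_combination hasx⟩
  -- J x is prime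
  have hprime : (auxCA_J q hqp x).IsPrime := by
    refine ⟨(Ideal.ne_top_iff_one _).mpr h1J, ?_⟩
    intro a b hab
    rw [or_iff_not_imp_right]
    intro hb
    obtain ⟨s, hs, habs⟩ := hab
    have hle : auxCA_J q hqp x ≤ auxCA_J q hqp (b * x) := by
      rintro c ⟨t, ht, hct⟩
      exact ⟨t, ht, by linear_combination b * hct⟩
    have hmem : auxCA_J q hqp (b * x) ∈
        {I : Ideal R | ∃ y : R, I = auxCA_J q hqp y ∧ (1 : R) ∉ I} := by
      refine ⟨b * x, rfl, ?_⟩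
      rintro ⟨t, ht, h1t⟩
      exact hb ⟨t, ht, by linear_combination h1t⟩
    have heq := hmax' _ hmem hle
    rw [← heq]
    exact ⟨s, hs, by linear_combination habs⟩
  -- q = J x by minimality
  have hqeq : q = auxCA_J q hqp x := le_antisymm (hq.2 ⟨hprime, bot_le⟩ hsubq) hsubq
  -- q is finitely generated
  obtain ⟨T, hT⟩ := IsNoetherian.noetherian q
  have hch : ∀ a : T, ∃ s, s ∉ q ∧ (a : R) * s * x = 0 := by
    intro a
    have haq : (a : R) ∈ q := hT ▸ Submodule.subset_span a.2
    rw [hqeq] at haq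
    exact haq
  choose f hf1 hf2 using hch
  haveI := hqp
  have hs0q : (∏ a ∈ T.attach, f a) ∈ q.primeCompl :=
    Submonoid.prod_mem _ (fun a _ => hf1 a)
  rw [AssociatedPrimes.mem_iff, isAssociatedPrime_iff]
  refine ⟨hqp, (∏ a ∈ T.attach, f a) * x, le_antisymm ?_ ?_⟩
  · rw [← hT]
    refine Submodule.span_le.mpr ?_
    intro a ha
    rw [SetLike.mem_coe, Submodule.mem_colon_singleton, Submodule.mem_bot]
    have h2 := hf2 ⟨a, ha⟩
    have h3 : (∏ b ∈ T.attach, f b) =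
        f ⟨a, ha⟩ * ∏ b ∈ T.attach.erase ⟨a, ha⟩, f b :=
      (Finset.mul_prod_erase T.attach f (Finset.mem_attach T ⟨a, ha⟩)).symm
    have h4 : a • ((∏ b ∈ T.attach, f b) * x) = a * ((∏ b ∈ T.attach, f b) * x) := rfl
    rw [h4, h3]
    linear_combination (∏ b ∈ T.attach.erase ⟨a, ha⟩, f b) * h2
  · intro a ha
    rw [Submodule.mem_colon_singleton, Submodule.mem_bot] at ha
    have ha' : a * ((∏ b ∈ T.attach, f b) * x) = 0 := ha
    rw [hqeq]
    exact ⟨∏ b ∈ T.attach, f b, hs0q, by linear_combination ha'⟩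

/-- Regular elements are those avoiding all associated primes. -/
theorem auxCA_nzd_iff [IsNoetherianRing R] {r : R} :
    r ∈ nonZeroDivisors R ↔ ∀ p ∈ associatedPrimes R R, r ∉ p := by
  have h := biUnion_associatedPrimes_eq_zero_divisors R R
  constructor
  · intro hr p hp hrp
    have hmem : r ∈ ⋃ p ∈ associatedPrimes R R, (p : Set R) := Set.mem_biUnion hp hrp
    rw [h] at hmem
    obtain ⟨y, hy0, hy⟩ := hmem
    refine hy0 (mem_nonZeroDivisors_iff_right.mp hr y ?_)
    rw [mul_comm]
    exact hy
  · intro hp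
    rw [mem_nonZeroDivisors_iff_right]
    intro y hy
    by_contra hy0
    have hmem : r ∈ {r : R | ∃ x : R, x ≠ 0 ∧ r • x = 0} :=
      ⟨y, hy0, by rw [smul_eq_mul, mul_comm]; exact hy⟩
    rw [← h] at hmem
    obtain ⟨p, hpm⟩ := Set.mem_iUnion.mp hmem
    obtain ⟨hpass, hrp⟩ := Set.mem_iUnion.mp hpm
    exact hp p hpass hrp

/-- In a reduced Noetherian ring, associated primes of `(0)` are exactly the minimal primes. -/
theorem auxCA_ass_eq_min_reduced {A : Type v} [CommRing A] [IsNoetherianRing A] [IsReduced A] :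
    associatedPrimes A A = minimalPrimes A := by
  apply subset_antisymm _ auxCA_min_subset_ass
  intro p hp0
  obtain ⟨hp, x, rfl⟩ := isAssociatedPrime_iff.mp (AssociatedPrimes.mem_iff.mp hp0)
  have hcol : (⊥ : Submodule A A).colon {x} = (A ∙ x).annihilator := by
    ext a
    rw [Submodule.mem_colon_singleton, Submodule.mem_annihilator_span_singleton, Submodule.mem_bot]
  rw [hcol] at hp ⊢
  have hx : x ≠ 0 := by
    rintro rfl
    have h1 : (A ∙ (0 : A)).annihilator = ⊤ := by
      rw [Submodule.span_singleton_eq_bot.mpr rfl, Submodule.annihilator_bot]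
    exact hp.ne_top h1
  have hxnil : x ∉ nilradical A := by
    rw [nilradical_eq_zero]
    simpa using hx
  obtain ⟨q, hqmin, hxq⟩ : ∃ q ∈ minimalPrimes A, x ∉ q := by
    by_contra hcon
    push_neg at hcon
    refine hxnil ?_
    rw [show nilradical A = (0 : Ideal A).radical from rfl, ← Ideal.sInf_minimalPrimes]
    exact Ideal.mem_sInf.mpr (fun {q} hq => hcon q hq)
  have hann : (A ∙ x).annihilator ≤ q := by
    intro a ha
    rw [Submodule.mem_annihilator_span_singleton] at ha
    have h1 : a * x ∈ q := by
      rw [← smul_eq_mul, ha]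
      exact q.zero_mem
    exact (hqmin.1.1.mem_or_mem h1).resolve_right hxq
  have h2 := hqmin.2 ⟨hp, bot_le⟩ hann
  have heq : (A ∙ x).annihilator = q := le_antisymm hann h2
  rw [heq]
  exact hqmin

/-- `c` is regular modulo the nilradical iff it avoids all minimal primes. -/
theorem auxCA_quot_nzd_iff [IsNoetherianRing R] (c : R) :
    Ideal.Quotient.mk (nilradical R) c ∈ nonZeroDivisors (R ⧸ nilradical R) ↔
      ∀ q ∈ minimalPrimes R, c ∉ q := by
  haveI : IsReduced (R ⧸ nilradical R) :=
    (Ideal.isRadical_iff_quotient_reduced (nilradical R)).mp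
      (Ideal.radical_isRadical (0 : Ideal R))
  rw [auxCA_nzd_iff, auxCA_ass_eq_min_reduced]
  have hcor : minimalPrimes R =
      Ideal.comap (Ideal.Quotient.mk (nilradical R)) '' minimalPrimes (R ⧸ nilradical R) := by
    rw [← Ideal.minimalPrimes_eq_comap]
    show minimalPrimes R = (nilradical R).minimalPrimes
    rw [show nilradical R = (0 : Ideal R).radical from rfl, Ideal.radical_minimalPrimes]
    rfl
  constructor
  · intro h q hqmin hcq
    rw [hcor] at hqmin
    obtain ⟨Q, hQ, rfl⟩ := hqmin
    exact h Q hQ (Ideal.mem_comap.mp hcq)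
  · intro h P hP hcP
    have h1 : Ideal.comap (Ideal.Quotient.mk (nilradical R)) P ∈ minimalPrimes R := by
      rw [hcor]; exact ⟨P, hP, rfl⟩
    exact h _ h1 (Ideal.mem_comap.mpr hcP)

/-- Elements of associated primes are zero divisors. -/
theorem auxCA_ass_zd {p : Ideal R} (hp : p ∈ associatedPrimes R R) {a : R} (ha : a ∈ p) :
    a ∉ nonZeroDivisors R := by
  obtain ⟨hprime, x, rfl⟩ := hp
  intro hreg
  obtain ⟨n, hn⟩ := ha
  rw [Submodule.mem_colon_singleton, Submodule.mem_bot, smul_eq_mul] at hn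
  have hx : x = 0 := mem_nonZeroDivisors_iff_left.mp (pow_mem hreg n) x hn
  subst hx
  refine hprime.ne_top ((Ideal.eq_top_iff_one _).mpr (Ideal.le_radical ?_))
  rw [Submodule.mem_colon_singleton, smul_zero]
  exact Submodule.zero_mem _

/-- Prime avoidance applied to the (finitely many) minimal primes. -/
theorem auxCA_avoid [IsNoetherianRing R] {p : Ideal R}
    (h : (p : Set R) ⊆ ⋃ q ∈ minimalPrimes R, (q : Set R)) :
    ∃ q ∈ minimalPrimes R, p ≤ q := by
  classical
  have hfin := minimalPrimes.finite_of_isNoetherianRing R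
  have h' : (p : Set R) ⊆ ⋃ I ∈ (hfin.toFinset : Set (Ideal R)), ((fun i => i) I : Set R) := by
    rw [hfin.coe_toFinset]
    exact h
  obtain ⟨q, hq, hle⟩ :=
    (Ideal.subset_union_prime (f := fun i : Ideal R => i) (⊥ : Ideal R) ⊥
      (fun i hi _ _ => (hfin.mem_toFinset.mp hi).1.1)).mp h'
  exact ⟨q, hfin.mem_toFinset.mp hq, hle⟩

end AuxLemmas

/-- **Corollary (`CA2Sep12`).** Let `R` be a commutative Noetherian ring, `n = nilradical R`
its prime radical, `R̄ = R/n`, `C` the set of regular elements (non-zero-divisors) of `R` and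
`C' = {c : R | c + n is regular in R̄}`.  The following are equivalent:
(1) `R` has an Artinian quotient ring `Q = C⁻¹R` (encoded: the localization of `R` at its
non-zero-divisors is an Artinian ring);
(2) `C' ⊆ C`;
(3) the associated primes of `(0)` are exactly the minimal primes of `R`. -/
theorem commutative_noetherian_artinian_quotient_ring_criterion
    (R : Type u) [CommRing R] [IsNoetherianRing R] :
    (IsArtinianRing (Localization (nonZeroDivisors R)) ↔
      ∀ c : R, Ideal.Quotient.mk (nilradical R) c ∈ nonZeroDivisors (R ⧸ nilradical R) →
        c ∈ nonZeroDivisors R) ∧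
    ((∀ c : R, Ideal.Quotient.mk (nilradical R) c ∈ nonZeroDivisors (R ⧸ nilradical R) →
        c ∈ nonZeroDivisors R) ↔
      associatedPrimes R R = minimalPrimes R) := by
  -- (2) ↔ (3)
  have h23 : (∀ c : R, Ideal.Quotient.mk (nilradical R) c ∈
        nonZeroDivisors (R ⧸ nilradical R) → c ∈ nonZeroDivisors R) ↔
      associatedPrimes R R = minimalPrimes R := by
    constructor
    · intro h2
      apply subset_antisymm _ auxCA_min_subset_ass
      intro p hp
      have hsub : (p : Set R) ⊆ ⋃ q ∈ minimalPrimes R, (q : Set R) := by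
        intro a ha
        by_contra hcon
        have hnot : ∀ q ∈ minimalPrimes R, a ∉ q := by
          intro q hq haq
          exact hcon (Set.mem_biUnion hq haq)
        have hreg : a ∈ nonZeroDivisors R := h2 a ((auxCA_quot_nzd_iff a).mpr hnot)
        exact auxCA_ass_zd hp ha hreg
      obtain ⟨q, hq, hle⟩ := auxCA_avoid hsub
      haveI : p.IsPrime := hp.1
      obtain ⟨q0, hq0, hq0le⟩ := Ideal.exists_minimalPrimes_le (bot_le : (⊥ : Ideal R) ≤ p)
      have hqq0 : q ≤ q0 := hq.2 hq0.1 (hq0le.trans hle)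
      have hpq : p = q := le_antisymm hle (hqq0.trans hq0le)
      rw [hpq]
      exact hq
    · intro h3 c hc
      rw [auxCA_nzd_iff]
      intro p hp
      rw [h3] at hp
      exact (auxCA_quot_nzd_iff c).mp hc p hp
  -- (1) ↔ (3)
  have h13 : IsArtinianRing (Localization (nonZeroDivisors R)) ↔
      associatedPrimes R R = minimalPrimes R := by
    set e := IsLocalization.orderIsoOfPrime (nonZeroDivisors R)
      (Localization (nonZeroDivisors R)) with he
    constructor
    · intro hart
      apply subset_antisymm _ auxCA_min_subset_ass
      intro p hp
      haveI hpp : p.IsPrime := hp.1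
      obtain ⟨q0, hq0, hq0le⟩ := Ideal.exists_minimalPrimes_le (bot_le : (⊥ : Ideal R) ≤ p)
      have hq0ass : q0 ∈ associatedPrimes R R := auxCA_min_subset_ass hq0
      have hdisj : ∀ {r : Ideal R}, r ∈ associatedPrimes R R →
          Disjoint ((nonZeroDivisors R : Submonoid R) : Set R) (r : Set R) := by
        intro r hr
        rw [Set.disjoint_right]
        intro a ha
        exact auxCA_ass_zd hr ha
      set Pq := e.symm ⟨q0, hq0.1.1, hdisj hq0ass⟩ with hPq
      set Pp := e.symm ⟨p, hpp, hdisj hp⟩ with hPp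
      have hle : Pq ≤ Pp := e.symm.monotone (Subtype.mk_le_mk.mpr hq0le)
      haveI := hart
      have hmaxq : Pq.1.IsMaximal := (IsArtinianRing.isPrime_iff_isMaximal Pq.1).mp Pq.2
      have heq : Pq = Pp := Subtype.ext (hmaxq.eq_of_le Pp.2.ne_top hle)
      have heq2 := e.symm.injective heq
      have heq3 : q0 = p := congrArg Subtype.val heq2
      rw [← heq3]
      exact hq0
    · intro h3
      haveI : IsNoetherianRing (Localization (nonZeroDivisors R)) :=
        IsLocalization.isNoetherianRing (nonZeroDivisors R) _ ‹IsNoetherianRing R›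
      apply auxCA_isArtinianRing_of_primes_maximal
      intro P hPprime
      obtain ⟨Mx, hMx, hPMx⟩ := P.exists_le_maximal hPprime.ne_top
      have h1 := (e ⟨P, hPprime⟩).2
      have h2 := (e ⟨Mx, hMx.isPrime⟩).2
      have hpm : (e ⟨P, hPprime⟩).1 ≤ (e ⟨Mx, hMx.isPrime⟩).1 :=
        e.monotone (Subtype.mk_le_mk.mpr hPMx)
      set p := (e ⟨P, hPprime⟩).1 with hpdef
      set m' := (e ⟨Mx, hMx.isPrime⟩).1 with hmdef
      have hsub : (m' : Set R) ⊆ ⋃ q ∈ minimalPrimes R, (q : Set R) := by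
        intro a ha
        have hanzd : a ∉ nonZeroDivisors R := fun hmem =>
          (Set.disjoint_left.mp h2.2) hmem ha
        have hnall : ¬ ∀ pp ∈ associatedPrimes R R, a ∉ pp := fun hc =>
          hanzd (auxCA_nzd_iff.mpr hc)
        push_neg at hnall
        obtain ⟨pp, hpp, happ⟩ := hnall
        rw [h3] at hpp
        exact Set.mem_biUnion hpp happ
      obtain ⟨qq, hqq, hmqq⟩ := auxCA_avoid hsub
      haveI : p.IsPrime := h1.1
      obtain ⟨q0, hq0, hq0le⟩ := Ideal.exists_minimalPrimes_le (bot_le : (⊥ : Ideal R) ≤ p)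
      have hqq0 : qq ≤ q0 := hqq.2 hq0.1 (hq0le.trans (hpm.trans hmqq))
      have hpm' : m' ≤ p := hmqq.trans (hqq0.trans hq0le)
      have heq : (⟨P, hPprime⟩ : {p : Ideal (Localization (nonZeroDivisors R)) // p.IsPrime}) =
          ⟨Mx, hMx.isPrime⟩ := by
        apply e.injective
        exact Subtype.ext (le_antisymm hpm hpm')
      have hPM : P = Mx := congrArg Subtype.val heq
      rw [hPM]
      exact hMx
  exact ⟨h13.trans h23.symm, h23⟩
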